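/- Let g : Ω × ℝ² → ℝ be a jointly measurable random field such that for every t ∈ ℝ² the random variable g(·,t) has the centered Gaussian distribution N(0,σ²) with σ > 0, let X be a real random variable with E[X] = 0 and E[|X|³] < ∞ such that X is independent of g(·,t) for every t, and let ε > 0. Let T ⊆ ℝ² be a measurable set with 0 < λ(T) < ∞ and u ∈ ℝ. Then the normalized mean excursion area of the perturbed field f(t) = g(t) + εX satisfies | E[λ({t ∈ T : g(ω,t) + εX(ω) ≥ u})]/λ(T) − Ψ(u/σ) − (ε² E[X²]/(2σ²)) Ψ''(u/σ) | ≤ ε³ E[|X|³]/(6 σ³ √(2π)). -/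

import Mathlib

open MeasureTheory ProbabilityTheory

/-- The standard Gaussian tail function `Ψ(x) = (2π)^{-1/2} ∫_x^∞ e^{-t²/2} dt`. -/
noncomputable def Psi (x : ℝ) : ℝ :=
  ∫ t in Set.Ioi x, (Real.sqrt (2 * Real.pi))⁻¹ * Real.exp (-t ^ 2 / 2)

/-- Second derivative of the Gaussian tail: `Ψ''(x) = (2π)^{-1/2} x e^{-x²/2}`. -/
noncomputable def PsiD2 (x : ℝ) : ℝ :=
  (Real.sqrt (2 * Real.pi))⁻¹ * x * Real.exp (-x ^ 2 / 2)

/-! ### Auxiliary analytic lemmas -/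

noncomputable def phiG (s : ℝ) : ℝ := (Real.sqrt (2 * Real.pi))⁻¹ * Real.exp (-s ^ 2 / 2)

lemma phiG_cont : Continuous phiG := by
  unfold phiG; fun_prop

lemma phiG_nonneg (s : ℝ) : 0 ≤ phiG s := by
  unfold phiG; positivity

lemma phiG_integrable : MeasureTheory.Integrable phiG := by
  unfold phiG
  apply Integrable.const_mul
  have : ∀ s : ℝ, -s ^ 2 / 2 = -(2:ℝ)⁻¹ * s ^ 2 := by intro s; ring
  simp_rw [this]
  exact integrable_exp_neg_mul_sq (by norm_num)

lemma exp_sq_hasDeriv (r : ℝ) :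
    HasDerivAt (fun s : ℝ => Real.exp (-s ^ 2 / 2)) (-r * Real.exp (-r ^ 2 / 2)) r := by
  have h1 : HasDerivAt (fun s : ℝ => -s ^ 2 / 2) (-r) r := by
    have := ((hasDerivAt_pow 2 r).neg.div_const 2)
    refine this.congr_deriv ?_
    push_cast; ring
  simpa [mul_comm] using h1.exp

lemma phiG_hasDeriv (r : ℝ) : HasDerivAt phiG (-r * phiG r) r := by
  have := (exp_sq_hasDeriv r).const_mul (Real.sqrt (2 * Real.pi))⁻¹
  unfold phiG
  refine this.congr_deriv ?_
  ring

lemma idphiG_hasDeriv (r : ℝ) :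
    HasDerivAt (fun s => s * phiG s) ((1 - r ^ 2) * phiG r) r := by
  have := (hasDerivAt_id r).mul (phiG_hasDeriv r)
  refine this.congr_deriv ?_
  unfold phiG
  simp only [id]; ring

lemma Psi_sub (a b : ℝ) : Psi a - Psi b = ∫ s in a..b, phiG s := by
  have key : ∀ x y : ℝ, x ≤ y → Psi x - Psi y = ∫ s in x..y, phiG s := by
    intro x y hxy
    rw [intervalIntegral.integral_of_le hxy]
    have hun : Set.Ioc x y ∪ Set.Ioi y = Set.Ioi x := Set.Ioc_union_Ioi_eq_Ioi hxy
    have hdisj : Disjoint (Set.Ioc x y) (Set.Ioi y) := by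
      rw [Set.disjoint_left]
      rintro a ⟨-, h2⟩ h3
      exact absurd h3 (not_lt.mpr h2)
    have := MeasureTheory.setIntegral_union hdisj measurableSet_Ioi
      (phiG_integrable.integrableOn) (phiG_integrable.integrableOn)
    unfold Psi
    rw [show Set.Ioi x = Set.Ioc x y ∪ Set.Ioi y from hun.symm]
    rw [show (fun t : ℝ => (Real.sqrt (2 * Real.pi))⁻¹ * Real.exp (-t ^ 2 / 2)) = phiG from rfl] at *
    rw [this]; ring
  rcases le_total a b with h | h
  · exact key a b h
  · rw [intervalIntegral.integral_symm]
    have := key b a h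
    rw [← this]; ring

lemma Psi_antitone : Antitone Psi := by
  intro x y hxy
  have h := Psi_sub x y
  have h2 : (0:ℝ) ≤ ∫ s in x..y, phiG s :=
    intervalIntegral.integral_nonneg hxy (fun r _ => phiG_nonneg r)
  linarith

lemma Psi_nonneg (x : ℝ) : 0 ≤ Psi x := by
  unfold Psi
  apply integral_nonneg
  intro t
  positivity

lemma step_bound {F : ℝ → ℝ} (hF : Continuous F) (a C : ℝ) (hC : 0 ≤ C) (n : ℕ)
    (h : ∀ r, |F r| ≤ C * |r - a| ^ n) (s : ℝ) :
    |∫ r in a..s, F r| ≤ C * |s - a| ^ (n + 1) / (n + 1) := by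
  have hpow : ∀ x y : ℝ, (∫ r in x..y, C * (r - x) ^ n) = C * (y - x) ^ (n+1) / (n+1) := by
    intro x y
    rw [intervalIntegral.integral_const_mul]
    rw [intervalIntegral.integral_comp_sub_right (fun r => r ^ n) x]
    rw [integral_pow]
    simp [mul_div_assoc]
  have hpow' : ∀ x y : ℝ, (∫ r in y..x, C * (x - r) ^ n) = C * (x - y) ^ (n+1) / (n+1) := by
    intro x y
    rw [intervalIntegral.integral_const_mul]
    rw [intervalIntegral.integral_comp_sub_left (fun r => r ^ n) x]
    rw [integral_pow]
    simp [mul_div_assoc]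
  rcases le_total a s with hs | hs
  · have hb : IntervalIntegrable (fun r => C * (r - a) ^ n) volume a s := by
      apply Continuous.intervalIntegrable; fun_prop
    have := intervalIntegral.norm_integral_le_abs_of_norm_le (μ := volume) (f := F)
      (a := a) (b := s) (g := fun r => C * (r - a) ^ n) ?_ hb
    · rw [hpow] at this
      rw [abs_of_nonneg (by have h0 := sub_nonneg.mpr hs; positivity)] at this
      rw [Real.norm_eq_abs] at this
      refine this.trans_eq ?_
      rw [abs_of_nonneg (by linarith)]
    · rw [Set.uIoc_of_le hs]
      filter_upwards [ae_restrict_mem measurableSet_Ioc] with r hr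
      rw [Real.norm_eq_abs]
      refine (h r).trans_eq ?_
      rw [abs_of_nonneg (by linarith [hr.1.le])]
  · have hb : IntervalIntegrable (fun r => C * (a - r) ^ n) volume s a := by
      apply Continuous.intervalIntegrable; fun_prop
    rw [intervalIntegral.integral_symm, abs_neg]
    have := intervalIntegral.norm_integral_le_abs_of_norm_le (μ := volume) (f := F)
      (a := s) (b := a) (g := fun r => C * (a - r) ^ n) ?_ hb
    · rw [hpow'] at this
      rw [abs_of_nonneg (by have h0 := sub_nonneg.mpr hs; positivity)] at this
      rw [Real.norm_eq_abs] at this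
      refine this.trans_eq ?_
      rw [abs_of_nonpos (by linarith), neg_sub]
    · rw [Set.uIoc_of_le hs]
      filter_upwards [ae_restrict_mem measurableSet_Ioc] with r hr
      rw [Real.norm_eq_abs]
      refine (h r).trans_eq ?_
      rw [abs_of_nonpos (by linarith [hr.2]), neg_sub]

lemma abs_one_sub_sq_le (q : ℝ) : |1 - q ^ 2| ≤ Real.exp (q ^ 2 / 2) := by
  have h1 := Real.add_one_le_exp (q ^ 2 / 2)
  have h2 := Real.add_one_le_exp (q ^ 2 / 4)
  have h3 : Real.exp (q ^ 2 / 2) = Real.exp (q ^ 2 / 4) ^ 2 := by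
    rw [show q^2/2 = q^2/4 + q^2/4 by ring, Real.exp_add]; exact (sq _).symm
  rcases abs_cases (1 - q ^ 2) with ⟨he, _⟩ | ⟨he, _⟩ <;> rw [he] <;>
    nlinarith [sq_nonneg q, sq_nonneg (q^2/4)]

lemma F2_bound (a q : ℝ) : |(1 - q ^ 2) * phiG q| ≤ (Real.sqrt (2 * Real.pi))⁻¹ * |q - a| ^ 0 := by
  rw [pow_zero, mul_one, abs_mul]
  have h1 : |phiG q| = (Real.sqrt (2 * Real.pi))⁻¹ * Real.exp (-q ^ 2 / 2) := by
    rw [phiG, abs_of_nonneg (by positivity)]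
  rw [h1]
  have h2 := abs_one_sub_sq_le q
  calc |1 - q ^ 2| * ((Real.sqrt (2 * Real.pi))⁻¹ * Real.exp (-q ^ 2 / 2))
      ≤ Real.exp (q ^ 2 / 2) * ((Real.sqrt (2 * Real.pi))⁻¹ * Real.exp (-q ^ 2 / 2)) := by
        apply mul_le_mul_of_nonneg_right h2 (by positivity)
    _ = (Real.sqrt (2 * Real.pi))⁻¹ := by
        rw [show Real.exp (q^2/2) * ((Real.sqrt (2*Real.pi))⁻¹ * Real.exp (-q^2/2))
            = (Real.sqrt (2*Real.pi))⁻¹ * (Real.exp (q^2/2) * Real.exp (-q^2/2)) by ring,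
          ← Real.exp_add, show q^2/2 + -q^2/2 = 0 by ring, Real.exp_zero, mul_one]

lemma psi_taylor (a h : ℝ) :
    |Psi (a + h) - Psi a + h * phiG a - h ^ 2 / 2 * (a * phiG a)|
      ≤ (Real.sqrt (2 * Real.pi))⁻¹ * |h| ^ 3 / 6 := by
  set C := (Real.sqrt (2 * Real.pi))⁻¹ with hCdef
  have hC : 0 ≤ C := inv_nonneg.mpr (Real.sqrt_nonneg _)
  have hcont2 : Continuous (fun q : ℝ => (1 - q ^ 2) * phiG q) :=
    ((continuous_const.sub (continuous_pow 2)).mul phiG_cont)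
  have hcont1 : Continuous (fun r : ℝ => r * phiG r - a * phiG a) :=
    (continuous_id.mul phiG_cont).sub continuous_const
  have hcontG : Continuous (fun s : ℝ => phiG s - phiG a + a * phiG a * (s - a)) :=
    (phiG_cont.sub continuous_const).add
      (continuous_const.mul (continuous_id.sub continuous_const))
  have hF1 : ∀ r : ℝ, r * phiG r - a * phiG a = ∫ q in a..r, (1 - q ^ 2) * phiG q := by
    intro r
    rw [intervalIntegral.integral_eq_sub_of_hasDerivAt (f := fun s => s * phiG s)
      (fun q _ => idphiG_hasDeriv q) (hcont2.intervalIntegrable a r)]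
  have hF1b : ∀ r, |r * phiG r - a * phiG a| ≤ C * |r - a| ^ 1 := by
    intro r
    rw [hF1 r]
    have := step_bound hcont2 a C hC 0 (fun q => F2_bound a q) r
    simpa using this
  have hW : ∀ r : ℝ, HasDerivAt (fun r => -phiG r - a * phiG a * r)
      (r * phiG r - a * phiG a) r := by
    intro r
    have := (phiG_hasDeriv r).neg.sub ((hasDerivAt_id r).const_mul (a * phiG a))
    refine this.congr_deriv ?_
    simp [id]
  have hG : ∀ s : ℝ, phiG s - phiG a + a * phiG a * (s - a)
      = -∫ r in a..s, (r * phiG r - a * phiG a) := by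
    intro s
    rw [intervalIntegral.integral_eq_sub_of_hasDerivAt (fun r _ => hW r)
      (hcont1.intervalIntegrable a s)]
    ring
  have hGb : ∀ s, |phiG s - phiG a + a * phiG a * (s - a)| ≤ C / 2 * |s - a| ^ 2 := by
    intro s
    rw [hG s, abs_neg]
    have := step_bound hcont1 a C hC 1 hF1b s
    calc |∫ r in a..s, (r * phiG r - a * phiG a)| ≤ C * |s - a| ^ (1+1) / (1+1) := by
          simpa using this
      _ = C / 2 * |s - a| ^ 2 := by norm_num; ring
  have hlin : ∀ r : ℝ, HasDerivAt (fun r => (r - a) ^ 2 / 2) (r - a) r := by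
    intro r
    have := (((hasDerivAt_id r).sub_const a).pow 2).div_const 2
    refine this.congr_deriv ?_
    simp [id]
  have hGint : ∫ s in a..a+h, (phiG s - phiG a + a * phiG a * (s - a))
      = -(Psi (a+h) - Psi a + h * phiG a - h ^ 2 / 2 * (a * phiG a)) := by
    have e1 : ∫ s in a..a+h, (s - a) = h ^ 2 / 2 := by
      rw [intervalIntegral.integral_eq_sub_of_hasDerivAt (fun r _ => hlin r)
        ((continuous_id.sub continuous_const).intervalIntegrable a (a+h))]
      ring_nf
    have e2 : ∫ s in a..a+h, phiG s = Psi a - Psi (a+h) := (Psi_sub a (a+h)).symm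
    have i1 : IntervalIntegrable (fun s => phiG s - phiG a) volume a (a+h) := by
      apply Continuous.intervalIntegrable
      exact phiG_cont.sub continuous_const
    have i2 : IntervalIntegrable (fun s => a * phiG a * (s - a)) volume a (a+h) := by
      apply Continuous.intervalIntegrable
      exact continuous_const.mul (continuous_id.sub continuous_const)
    rw [intervalIntegral.integral_add i1 i2,
      intervalIntegral.integral_sub (phiG_cont.intervalIntegrable _ _)
        (intervalIntegrable_const),
      intervalIntegral.integral_const_mul, e1, e2]
    rw [intervalIntegral.integral_const, smul_eq_mul]
    ring
  have := step_bound hcontG a (C/2) (by linarith) 2 hGb (a+h)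
  rw [hGint] at this
  rw [abs_neg] at this
  calc |Psi (a + h) - Psi a + h * phiG a - h ^ 2 / 2 * (a * phiG a)|
      ≤ C / 2 * |a + h - a| ^ (2+1) / (2+1) := by simpa using this
    _ = C * |h| ^ 3 / 6 := by
        rw [show a + h - a = h by ring]
        norm_num; ring

/-! ### Gaussian tail -/

lemma gauss_std_tail (a : ℝ) : gaussianReal 0 1 (Set.Ici a) = ENNReal.ofReal (Psi a) := by
  rw [gaussianReal_apply_eq_integral 0 one_ne_zero]
  congr 1
  rw [MeasureTheory.integral_Ici_eq_integral_Ioi]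
  apply setIntegral_congr_fun measurableSet_Ioi
  intro x _
  simp only [gaussianPDFReal]
  norm_num

lemma gauss_tail {σ : ℝ} (hσ : 0 < σ) (c : ℝ) :
    gaussianReal 0 ⟨σ ^ 2, sq_nonneg σ⟩ (Set.Ici c) = ENNReal.ofReal (Psi (c / σ)) := by
  have hmap := gaussianReal_map_const_mul (μ := 0) (v := 1) σ
  rw [mul_zero] at hmap
  have hvv : (⟨σ ^ 2, sq_nonneg σ⟩ : NNReal) * 1 = ⟨σ ^ 2, sq_nonneg σ⟩ := mul_one _
  replace hmap : Measure.map (fun x => σ * x) (gaussianReal 0 1) = gaussianReal 0 ⟨σ ^ 2, sq_nonneg σ⟩ := by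
    rw [mul_one] at hmap; exact hmap
  rw [← hmap, Measure.map_apply (measurable_id'.const_mul σ) measurableSet_Ici]
  have hpre : (σ * ·) ⁻¹' Set.Ici c = Set.Ici (c / σ) := by
    ext x
    simp only [Set.mem_preimage, Set.mem_Ici]
    rw [div_le_iff₀ hσ, mul_comm]
  rw [hpre, gauss_std_tail]

lemma Psi_le_one (a : ℝ) : Psi a ≤ 1 := by
  have h := gauss_std_tail a
  have h2 : gaussianReal 0 1 (Set.Ici a) ≤ 1 := prob_le_one
  rw [h] at h2
  have := Psi_nonneg a
  rwa [← ENNReal.ofReal_one, ENNReal.ofReal_le_ofReal_iff (by norm_num)] at h2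

lemma PsiD2_eq (x : ℝ) : PsiD2 x = x * phiG x := by
  unfold PsiD2 phiG; ring

/-! ### Main theorem -/

theorem mean_excursion_area_perturbed_expansion
    {Ω : Type*} [MeasurableSpace Ω] (P : Measure Ω) [IsProbabilityMeasure P]
    (g : Ω → (ℝ × ℝ) → ℝ)
    (hg_meas : Measurable (fun p : Ω × (ℝ × ℝ) => g p.1 p.2))
    (σ : ℝ) (hσ : 0 < σ)
    (hg_law : ∀ t : ℝ × ℝ,
      Measure.map (fun ω => g ω t) P = gaussianReal 0 ⟨σ ^ 2, sq_nonneg σ⟩)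
    (X : Ω → ℝ) (hX_meas : Measurable X)
    (hX_mean : ∫ ω, X ω ∂P = 0)
    (hX3 : Integrable (fun ω => |X ω| ^ 3) P)
    (hindep : ∀ t : ℝ × ℝ, IndepFun X (fun ω => g ω t) P)
    (ε : ℝ) (hε : 0 < ε)
    (T : Set (ℝ × ℝ)) (hT_meas : MeasurableSet T)
    (hT_pos : 0 < volume T) (hT_fin : volume T < ⊤)
    (u : ℝ) :
    |(∫ ω, (volume {t ∈ T | u ≤ g ω t + ε * X ω}).toReal ∂P) / (volume T).toReal
        - Psi (u / σ)
        - ε ^ 2 * (∫ ω, (X ω) ^ 2 ∂P) / (2 * σ ^ 2) * PsiD2 (u / σ)|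
      ≤ ε ^ 3 * (∫ ω, |X ω| ^ 3 ∂P) / (6 * σ ^ 3 * Real.sqrt (2 * Real.pi)) := by
  have hsqrt_pos : 0 < Real.sqrt (2 * Real.pi) := Real.sqrt_pos.mpr (by positivity)
  set a : ℝ := u / σ with ha
  -- the perturbed tail probability
  set q : ℝ := ∫ ω, Psi ((u - ε * X ω) / σ) ∂P with hq
  have hPsi_meas : Measurable Psi := Psi_antitone.measurable
  have hF_meas : Measurable (fun ω => Psi ((u - ε * X ω) / σ)) := by
    apply hPsi_meas.comp
    exact ((measurable_const.sub (hX_meas.const_mul ε)).div_const σ)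
  have hF_int : Integrable (fun ω => Psi ((u - ε * X ω) / σ)) P := by
    apply Integrable.mono' (integrable_const (1:ℝ)) hF_meas.aestronglyMeasurable
    filter_upwards with ω
    rw [Real.norm_eq_abs, abs_of_nonneg (Psi_nonneg _)]
    exact Psi_le_one _
  have hq_nonneg : 0 ≤ q := integral_nonneg fun ω => Psi_nonneg _
  -- Claim 1 : per-point probability
  have claim1 : ∀ t : ℝ × ℝ, P {ω | u ≤ g ω t + ε * X ω} = ENNReal.ofReal q := by
    intro t
    have hgt : Measurable (fun ω => g ω t) :=
      hg_meas.comp (measurable_id.prodMk measurable_const)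
    have hpair : Measurable (fun ω => (X ω, g ω t)) := hX_meas.prodMk hgt
    have hmapeq : Measure.map (fun ω => (X ω, g ω t)) P
        = (Measure.map X P).prod (Measure.map (fun ω => g ω t) P) :=
      (indepFun_iff_map_prod_eq_prod_map_map hX_meas.aemeasurable hgt.aemeasurable).mp
        (hindep t)
    have hSm : MeasurableSet {p : ℝ × ℝ | u ≤ p.2 + ε * p.1} :=
      measurableSet_le measurable_const (measurable_snd.add (measurable_fst.const_mul ε))
    have h1 : {ω | u ≤ g ω t + ε * X ω}
        = (fun ω => (X ω, g ω t)) ⁻¹' {p : ℝ × ℝ | u ≤ p.2 + ε * p.1} := rfl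
    haveI : IsProbabilityMeasure (gaussianReal 0 ⟨σ ^ 2, sq_nonneg σ⟩) :=
      instIsProbabilityMeasureGaussianReal 0 _
    rw [h1, ← Measure.map_apply hpair hSm, hmapeq, hg_law t, Measure.prod_apply hSm]
    have h2 : ∀ x : ℝ, (Prod.mk x ⁻¹' {p : ℝ × ℝ | u ≤ p.2 + ε * p.1})
        = Set.Ici (u - ε * x) := by
      intro x
      ext y
      simp only [Set.mem_preimage, Set.mem_setOf_eq, Set.mem_Ici]
      constructor <;> intro <;> linarith
    simp_rw [h2, gauss_tail hσ]
    rw [← MeasureTheory.ofReal_integral_eq_lintegral_ofReal]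
    · congr 1
      rw [hq]
      exact MeasureTheory.integral_map (φ := X) (f := fun x => Psi ((u - ε * x) / σ))
        hX_meas.aemeasurable
        (hPsi_meas.comp
          ((measurable_const.sub (measurable_id.const_mul ε)).div_const σ)).aestronglyMeasurable
    · have hmeas2 : Measurable (fun x : ℝ => Psi ((u - ε * x) / σ)) :=
        hPsi_meas.comp ((measurable_const.sub (measurable_id.const_mul ε)).div_const σ)
      have : IsProbabilityMeasure (Measure.map X P) :=
        Measure.isProbabilityMeasure_map hX_meas.aemeasurable
      apply Integrable.mono' (integrable_const (1:ℝ)) hmeas2.aestronglyMeasurable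
      filter_upwards with x
      rw [Real.norm_eq_abs, abs_of_nonneg (Psi_nonneg _)]
      exact Psi_le_one _
    · exact ae_of_all _ fun x => Psi_nonneg _
  -- Claim 2 : Fubini
  have claim2 : (∫ ω, (volume {t ∈ T | u ≤ g ω t + ε * X ω}).toReal ∂P)
      = (volume T).toReal * q := by
    set S2 : Set (Ω × (ℝ × ℝ)) := {p | p.2 ∈ T ∧ u ≤ g p.1 p.2 + ε * X p.1} with hS2
    have hS2m : MeasurableSet S2 := by
      rw [hS2, Set.setOf_and]
      exact (measurable_snd hT_meas).inter
        (measurableSet_le measurable_const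
          (hg_meas.add ((hX_meas.comp measurable_fst).const_mul ε)))
    have hsec : ∀ ω, {t ∈ T | u ≤ g ω t + ε * X ω} = Prod.mk ω ⁻¹' S2 := fun ω => rfl
    have hmeasf : Measurable (fun ω => volume (Prod.mk ω ⁻¹' S2)) :=
      measurable_measure_prodMk_left hS2m
    have hbound : ∀ ω, volume (Prod.mk ω ⁻¹' S2) ≤ volume T := by
      intro ω
      apply measure_mono
      intro t ht
      exact ht.1
    simp_rw [hsec]
    rw [integral_toReal hmeasf.aemeasurable
      (ae_of_all _ fun ω => lt_of_le_of_lt (hbound ω) hT_fin)]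
    have hfub : ∫⁻ ω, volume (Prod.mk ω ⁻¹' S2) ∂P = volume T * ENNReal.ofReal q := by
      rw [← Measure.prod_apply hS2m, Measure.prod_apply_symm hS2m]
      have hsec2 : ∀ t : ℝ × ℝ, P ((fun ω => (ω, t)) ⁻¹' S2)
          = T.indicator (fun _ => ENNReal.ofReal q) t := by
        intro t
        by_cases ht : t ∈ T
        · rw [Set.indicator_of_mem ht]
          rw [show (fun ω => (ω, t)) ⁻¹' S2 = {ω | u ≤ g ω t + ε * X ω} by
            ext ω; simp [hS2, ht]]
          exact claim1 t
        · rw [Set.indicator_of_notMem ht]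
          rw [show (fun ω => (ω, t)) ⁻¹' S2 = (∅ : Set Ω) by
            ext ω; simp [hS2, ht]]
          simp
      simp_rw [hsec2]
      rw [lintegral_indicator_const hT_meas (ENNReal.ofReal q), mul_comm]
    rw [hfub, ENNReal.toReal_mul, ENNReal.toReal_ofReal hq_nonneg]
  have hvolT_pos : 0 < (volume T).toReal := ENNReal.toReal_pos hT_pos.ne' hT_fin.ne
  have hnorm : (∫ ω, (volume {t ∈ T | u ≤ g ω t + ε * X ω}).toReal ∂P)
      / (volume T).toReal = q := by
    rw [claim2, mul_comm, mul_div_assoc, div_self hvolT_pos.ne', mul_one]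
  rw [hnorm]
  -- Taylor expansion
  have h13 : ∀ x : ℝ, |x| ≤ |x| ^ 3 + 1 := by
    intro x
    nlinarith [abs_nonneg x, mul_nonneg (abs_nonneg x) (sq_nonneg (|x| - 1)),
      sq_nonneg (2 * |x| - 1)]
  have h23 : ∀ x : ℝ, x ^ 2 ≤ |x| ^ 3 + 1 := by
    intro x
    have hx : x ^ 2 = |x| ^ 2 := (sq_abs x).symm
    nlinarith [abs_nonneg x, mul_nonneg (mul_nonneg (abs_nonneg x) (abs_nonneg x))
      (abs_nonneg x), sq_nonneg (|x| - 1)]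
  have hXint : Integrable X P := by
    apply Integrable.mono' (hX3.add (integrable_const 1)) hX_meas.aestronglyMeasurable
    filter_upwards with ω
    rw [Real.norm_eq_abs]
    exact h13 (X ω)
  have hX2int : Integrable (fun ω => X ω ^ 2) P := by
    apply Integrable.mono' (hX3.add (integrable_const 1))
      (hX_meas.pow_const 2).aestronglyMeasurable
    filter_upwards with ω
    rw [Real.norm_eq_abs, abs_of_nonneg (sq_nonneg _)]
    exact h23 (X ω)
  set c1 : ℝ := -(ε / σ) * phiG a with hc1
  set c2 : ℝ := ε ^ 2 / (2 * σ ^ 2) * (a * phiG a) with hc2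
  set D : Ω → ℝ := fun ω =>
    Psi ((u - ε * X ω) / σ) - Psi a + c1 * X ω - c2 * X ω ^ 2 with hD
  set cW : ℝ := (Real.sqrt (2 * Real.pi))⁻¹ * ε ^ 3 / (σ ^ 3 * 6) with hcW
  have hDbound : ∀ ω, |D ω| ≤ cW * |X ω| ^ 3 := by
    intro ω
    set hh : ℝ := -(ε * X ω) / σ with hhh
    have hah : a + hh = (u - ε * X ω) / σ := by
      rw [ha, hhh]; field_simp; ring
    have htay := psi_taylor a hh
    have heq : D ω = Psi (a + hh) - Psi a + hh * phiG a - hh ^ 2 / 2 * (a * phiG a) := by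
      rw [hD, hah, hc1, hc2, hhh]
      field_simp
    rw [heq]
    refine htay.trans_eq ?_
    have habs : |hh| = ε * |X ω| / σ := by
      rw [hhh, abs_div, abs_of_pos hσ, abs_neg, abs_mul, abs_of_pos hε]
    rw [habs, hcW]
    field_simp
  have hDint : Integrable D P := by
    exact (((hF_int.sub (integrable_const (Psi a))).add (hXint.const_mul c1)).sub
      ((hX2int.const_mul c2)))
  have i2 : Integrable (fun ω => c2 * X ω ^ 2) P := hX2int.const_mul c2
  have i3 : Integrable (fun ω => c1 * X ω) P := hXint.const_mul c1
  have i0 : Integrable (fun ω => Psi ((u - ε * X ω) / σ) - Psi a) P :=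
    hF_int.sub (integrable_const (Psi a))
  have i1 : Integrable (fun ω => Psi ((u - ε * X ω) / σ) - Psi a + c1 * X ω) P := i0.add i3
  have hDint_eq : ∫ ω, D ω ∂P = q - Psi a - c2 * ∫ ω, X ω ^ 2 ∂P := by
    rw [hD]
    rw [integral_sub i1 i2, integral_add i0 i3,
      integral_sub hF_int (integrable_const (Psi a)),
      integral_const_mul, integral_const_mul, hX_mean, integral_const]
    simp [hq]
  have key : q - Psi (u / σ) - ε ^ 2 * (∫ ω, X ω ^ 2 ∂P) / (2 * σ ^ 2) * PsiD2 (u / σ)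
      = ∫ ω, D ω ∂P := by
    rw [hDint_eq, hc2, PsiD2_eq, ← ha]
    ring
  rw [key]
  have habs_le : |∫ ω, D ω ∂P| ≤ ∫ ω, cW * |X ω| ^ 3 ∂P := by
    calc |∫ ω, D ω ∂P| ≤ ∫ ω, |D ω| ∂P := by
          have := MeasureTheory.norm_integral_le_integral_norm (f := D) (μ := P)
          simpa [Real.norm_eq_abs] using this
      _ ≤ ∫ ω, cW * |X ω| ^ 3 ∂P := by
          apply integral_mono hDint.abs (hX3.const_mul cW)
          intro ω
          exact hDbound ω
  refine habs_le.trans_eq ?_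
  rw [integral_const_mul, hcW]
  rw [div_mul_eq_mul_div, div_eq_div_iff (by positivity) (by positivity)]
  have hcancel : Real.sqrt (2 * Real.pi) * (Real.sqrt (2 * Real.pi))⁻¹ = 1 :=
    mul_inv_cancel₀ hsqrt_pos.ne'
  linear_combination (ε ^ 3 * (∫ ω, |X ω| ^ 3 ∂P) * σ ^ 3 * 6) * hcancel
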